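/- Under the stationary two-sequence k-mer model with L = 4, transition matrix M = exp(tQ) for the Jukes–Cantor rate matrix Q and branch length t ≥ 0, and uniform stationary vector π, set d = E[ ∑_{W ∈ [4]^k} (X₁^W − X₂^W)² ] (the expected squared Euclidean distance between the k-mer count vectors). Then t = −(3/4)·ln( (4/3)·(1 − d/(2(n−k+1)))^{1/k} − 1/3 ). -/

import Mathlib

set_option linter.unusedSectionVars false
set_option linter.unusedVariables false

open Finset Matrix

noncomputable abbrev JCa (t : ℝ) : ℝ := Real.exp (-(4 * t) / 3)

def JCU : Matrix (Fin 4) (Fin 4) ℝ :=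
  Matrix.of fun i j => if i = 0 ∨ j = 0 ∨ i = j then 1 else -1

lemma JCU_mul_JCU : JCU * ((1/4 : ℝ) • JCU) = 1 := by
  ext i j
  fin_cases i <;> fin_cases j <;>
    simp [JCU, Matrix.mul_apply, Fin.sum_univ_four, Matrix.one_apply] <;> norm_num

noncomputable def JCUu : (Matrix (Fin 4) (Fin 4) ℝ)ˣ :=
  ⟨JCU, (1/4 : ℝ) • JCU, JCU_mul_JCU, by
    ext i j
    fin_cases i <;> fin_cases j <;>
      simp [JCU, Matrix.mul_apply, Fin.sum_univ_four, Matrix.one_apply] <;> norm_num⟩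

lemma JC_decomp (t : ℝ) :
    t • (Matrix.of fun i j : Fin 4 => if i = j then (-1 : ℝ) else 1 / 3) =
      (JCUu : Matrix (Fin 4) (Fin 4) ℝ) *
        (Matrix.diagonal fun i : Fin 4 => if i = 0 then 0 else -(4*t)/3) *
        (↑JCUu⁻¹ : Matrix (Fin 4) (Fin 4) ℝ) := by
  have hinv : (↑JCUu⁻¹ : Matrix (Fin 4) (Fin 4) ℝ) = (1/4 : ℝ) • JCU := rfl
  rw [hinv]
  show t • _ = JCU * _ * _
  ext i j
  fin_cases i <;> fin_cases j <;>
    simp [JCU, Matrix.mul_apply, Fin.sum_univ_four, Matrix.diagonal] <;> ring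

lemma JC_Mform (t : ℝ) :
    NormedSpace.exp (t • (Matrix.of fun i j : Fin 4 => if i = j then (-1 : ℝ) else 1 / 3)) =
      Matrix.of fun i j : Fin 4 =>
        if i = j then (1 + 3 * JCa t) / 4 else (1 - JCa t) / 4 := by
  rw [JC_decomp t, Matrix.exp_units_conj, Matrix.exp_diagonal]
  have hexp : (NormedSpace.exp fun i : Fin 4 => if i = 0 then (0:ℝ) else -(4*t)/3) =
      fun i : Fin 4 => if i = 0 then 1 else JCa t := by
    funext i
    rw [Pi.coe_exp]
    by_cases h : i = 0 <;> simp [h, ← Real.exp_eq_exp_ℝ, JCa, Real.exp_zero]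
  rw [hexp]
  have hinv : (↑JCUu⁻¹ : Matrix (Fin 4) (Fin 4) ℝ) = (1/4 : ℝ) • JCU := rfl
  rw [hinv]
  show JCU * _ * _ = _
  ext i j
  fin_cases i <;> fin_cases j <;>
    simp [JCU, Matrix.mul_apply, Fin.sum_univ_four, Matrix.diagonal] <;> ring

open Finset

section Split

variable {n : ℕ} {S : Type*} [Fintype S] [DecidableEq S]

lemma JC_funSplitAt_symm_apply (q : Fin n) (x : S × ({ c : Fin n // c ≠ q } → S)) (j : Fin n) :
    (Equiv.funSplitAt q S).symm x j = if h : j = q then x.1 else x.2 ⟨j, h⟩ := by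
  rcases x with ⟨v, ρ⟩
  by_cases h : j = q
  · subst h; simp [Equiv.funSplitAt, Equiv.piSplitAt]
  · simp [Equiv.funSplitAt, Equiv.piSplitAt, h]

lemma JC_symm_eq_update (q : Fin n) (v v' : S) (ρ : { c : Fin n // c ≠ q } → S) :
    (Equiv.funSplitAt q S).symm (v, ρ) =
      Function.update ((Equiv.funSplitAt q S).symm (v', ρ)) q v := by
  funext c
  by_cases h : c = q
  · subst h; simp [JC_funSplitAt_symm_apply]
  · simp [JC_funSplitAt_symm_apply, h, Function.update_apply]

lemma JC_prod_split (f : S → ℝ) (q : Fin n) (v : S) (ρ : { c : Fin n // c ≠ q } → S) :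
    (∏ c, f ((Equiv.funSplitAt q S).symm (v, ρ) c)) =
      f v * ∏ c : { c : Fin n // c ≠ q }, f (ρ c) := by
  rw [Fintype.prod_eq_mul_prod_compl q]
  congr 1
  · rw [JC_funSplitAt_symm_apply]; simp
  · rw [Finset.prod_subtype (p := fun c : Fin n => c ≠ q) ({q}ᶜ : Finset (Fin n))
      (fun x => by simp) (fun c => f ((Equiv.funSplitAt q S).symm (v, ρ) c))]
    exact Finset.prod_congr rfl fun c _ => by
      rw [JC_funSplitAt_symm_apply]; simp [c.2]

lemma JC_sum_split (H : (Fin n → S) → ℝ) (q : Fin n) :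
    ∑ ω : Fin n → S, H ω
      = ∑ v : S, ∑ ρ : ({ c : Fin n // c ≠ q } → S),
          H ((Equiv.funSplitAt q S).symm (v, ρ)) := by
  rw [← Equiv.sum_comp (Equiv.funSplitAt q S).symm H, Fintype.sum_prod_type]

variable [Nonempty S]

/-- Core splitting lemma: peel off the coordinate `q`. -/
lemma JC_core_split (f : S → ℝ) (hf1 : ∑ v, f v = 1) (q : Fin n)
    (F : (Fin n → S) → ℝ) (G : (Fin n → S) → S → ℝ)
    (hF : ∀ ω v, F (Function.update ω q v) = F ω)
    (hG : ∀ ω v' v, G (Function.update ω q v') v = G ω v)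
    (r : ℝ) (hr : ∀ ω, ∑ v, f v * G ω v = r) :
    ∑ ω : Fin n → S, (∏ c, f (ω c)) * (F ω * G ω (ω q))
      = r * ∑ ω : Fin n → S, (∏ c, f (ω c)) * F ω := by
  classical
  obtain ⟨v₀⟩ := ‹Nonempty S›
  set base : ({ c : Fin n // c ≠ q } → S) → (Fin n → S) :=
    fun ρ => (Equiv.funSplitAt q S).symm (v₀, ρ) with hbase
  have hFv : ∀ v ρ, F ((Equiv.funSplitAt q S).symm (v, ρ)) = F (base ρ) := by
    intro v ρ
    rw [JC_symm_eq_update q v v₀ ρ, hF]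
  have hGv : ∀ v ρ, G ((Equiv.funSplitAt q S).symm (v, ρ)) v = G (base ρ) v := by
    intro v ρ
    rw [JC_symm_eq_update q v v₀ ρ, hG]
  have happ : ∀ (v : S) ρ, (Equiv.funSplitAt q S).symm (v, ρ) q = v := by
    intro v ρ; rw [JC_funSplitAt_symm_apply]; simp
  rw [JC_sum_split _ q, JC_sum_split (fun ω => (∏ c, f (ω c)) * F ω) q]
  have e1 : (∑ v : S, ∑ ρ : { c : Fin n // c ≠ q } → S,
      (∏ c, f ((Equiv.funSplitAt q S).symm (v, ρ) c)) *
        (F ((Equiv.funSplitAt q S).symm (v, ρ)) *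
          G ((Equiv.funSplitAt q S).symm (v, ρ)) ((Equiv.funSplitAt q S).symm (v, ρ) q)))
      = r * ∑ ρ : { c : Fin n // c ≠ q } → S,
          (∏ c : { c : Fin n // c ≠ q }, f (ρ c)) * F (base ρ) := by
    calc ∑ v : S, ∑ ρ : { c : Fin n // c ≠ q } → S,
          (∏ c, f ((Equiv.funSplitAt q S).symm (v, ρ) c)) *
            (F ((Equiv.funSplitAt q S).symm (v, ρ)) *
              G ((Equiv.funSplitAt q S).symm (v, ρ)) ((Equiv.funSplitAt q S).symm (v, ρ) q))
        = ∑ v : S, ∑ ρ : { c : Fin n // c ≠ q } → S, (f v * G (base ρ) v) *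
            ((∏ c : { c : Fin n // c ≠ q }, f (ρ c)) * F (base ρ)) := by
          refine Finset.sum_congr rfl fun v _ => Finset.sum_congr rfl fun ρ _ => ?_
          rw [JC_prod_split, happ, hFv, hGv]
          ring
      _ = ∑ ρ : { c : Fin n // c ≠ q } → S, (∑ v, f v * G (base ρ) v) *
            ((∏ c : { c : Fin n // c ≠ q }, f (ρ c)) * F (base ρ)) := by
          rw [Finset.sum_comm]
          exact Finset.sum_congr rfl fun ρ _ => (Finset.sum_mul _ _ _).symm
      _ = r * ∑ ρ : { c : Fin n // c ≠ q } → S,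
            (∏ c : { c : Fin n // c ≠ q }, f (ρ c)) * F (base ρ) := by
          rw [Finset.mul_sum]
          exact Finset.sum_congr rfl fun ρ _ => by rw [hr]
  have e2 : (∑ v : S, ∑ ρ : { c : Fin n // c ≠ q } → S,
      (∏ c, f ((Equiv.funSplitAt q S).symm (v, ρ) c)) *
        F ((Equiv.funSplitAt q S).symm (v, ρ)))
      = ∑ ρ : { c : Fin n // c ≠ q } → S,
          (∏ c : { c : Fin n // c ≠ q }, f (ρ c)) * F (base ρ) := by
    calc ∑ v : S, ∑ ρ : { c : Fin n // c ≠ q } → S,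
          (∏ c, f ((Equiv.funSplitAt q S).symm (v, ρ) c)) *
            F ((Equiv.funSplitAt q S).symm (v, ρ))
        = ∑ v : S, f v * ∑ ρ : { c : Fin n // c ≠ q } → S,
            (∏ c : { c : Fin n // c ≠ q }, f (ρ c)) * F (base ρ) := by
          refine Finset.sum_congr rfl fun v _ => ?_
          rw [Finset.mul_sum]
          refine Finset.sum_congr rfl fun ρ _ => ?_
          rw [JC_prod_split, hFv]
          ring
      _ = (∑ v, f v) * ∑ ρ : { c : Fin n // c ≠ q } → S,
            (∏ c : { c : Fin n // c ≠ q }, f (ρ c)) * F (base ρ) :=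
          (Finset.sum_mul _ _ _).symm
      _ = _ := by rw [hf1, one_mul]
  rw [e1, e2]

lemma JC_mass (f : S → ℝ) (hf1 : ∑ v, f v = 1) :
    ∑ ω : Fin n → S, (∏ c, f (ω c)) = 1 := by
  rw [← Fintype.prod_sum (fun _ : Fin n => fun v : S => f v)]
  simp [hf1]

end Split

/-- Value of `ω` at a natural-number position, with junk outside the range. -/
def JCval {n : ℕ} (ω : Fin n → Fin 4 × Fin 4) (p : ℕ) : Fin 4 × Fin 4 :=
  if h : p < n then ω ⟨p, h⟩ else (0, 0)

lemma JCval_lt {n : ℕ} (ω : Fin n → Fin 4 × Fin 4) {p : ℕ} (h : p < n) :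
    JCval ω p = ω ⟨p, h⟩ := dif_pos h

lemma JCval_update {n : ℕ} (ω : Fin n → Fin 4 × Fin 4) (q : Fin n) (v : Fin 4 × Fin 4)
    {p : ℕ} (h : p ≠ q.1) :
    JCval (Function.update ω q v) p = JCval ω p := by
  unfold JCval
  split
  · rw [Function.update_apply, if_neg]
    intro hc
    exact h (by rw [← hc])
  · rfl

section Chain

variable {n : ℕ} (f : Fin 4 × Fin 4 → ℝ)
  (hrow : ∀ a, ∑ b, f (a, b) = 1/4) (hcol : ∀ b, ∑ a, f (a, b) = 1/4)

include hrow hcol in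
lemma JC_f_one : ∑ v, f v = 1 := by
  rw [Fintype.sum_prod_type]
  simp [hrow]

include hrow hcol in
/-- The shifted-window matching probability: the cross terms. -/
lemma JC_chain (g g' : Fin 4 × Fin 4 → Fin 4)
    (hg : g = Prod.fst ∨ g = Prod.snd) (hg' : g' = Prod.fst ∨ g' = Prod.snd)
    (i s : ℕ) (hs : 1 ≤ s) :
    ∀ m : ℕ, i + s + m ≤ n →
    ∑ ω : Fin n → Fin 4 × Fin 4, (∏ c, f (ω c)) *
        (∏ j ∈ Finset.range m,
          if g (JCval ω (i + j)) = g' (JCval ω (i + s + j)) then (1:ℝ) else 0)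
      = (1/4) ^ m := by
  intro m
  induction m with
  | zero =>
    intro _
    simpa using JC_mass f (JC_f_one f hrow hcol)
  | succ m ih =>
    intro hm
    have hq : i + s + m < n := by omega
    set q : Fin n := ⟨i + s + m, hq⟩ with hqdef
    have key := JC_core_split f (JC_f_one f hrow hcol) q
      (F := fun ω => ∏ j ∈ Finset.range m,
        if g (JCval ω (i + j)) = g' (JCval ω (i + s + j)) then (1:ℝ) else 0)
      (G := fun ω v => if g (JCval ω (i + m)) = g' v then (1:ℝ) else 0)
      (hF := by
        intro ω v
        refine Finset.prod_congr rfl fun j hj => ?_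
        have hj' : j < m := Finset.mem_range.mp hj
        rw [JCval_update ω q v (p := i + j) (by simp [hqdef]; omega),
          JCval_update ω q v (p := i + s + j) (by simp [hqdef]; omega)])
      (hG := by
        intro ω v' v
        rw [JCval_update ω q v' (p := i + m) (by simp [hqdef]; omega)])
      (r := 1/4)
      (hr := by
        intro ω
        rcases hg' with h | h <;> subst h
        · rw [Fintype.sum_prod_type]
          have : ∀ a : Fin 4, (∑ b : Fin 4,
              f (a, b) * if g (JCval ω (i + m)) = (a, b).1 then (1:ℝ) else 0)
              = (if g (JCval ω (i + m)) = a then (1:ℝ) else 0) * (1/4) := by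
            intro a
            simp only [mul_ite, mul_one, mul_zero]
            by_cases h : g (JCval ω (i + m)) = a
            · simp [h, hrow]
            · simp [h]
          rw [Finset.sum_congr rfl fun a _ => this a]
          simp
        · rw [Fintype.sum_prod_type, Finset.sum_comm]
          have : ∀ b : Fin 4, (∑ a : Fin 4,
              f (a, b) * if g (JCval ω (i + m)) = (a, b).2 then (1:ℝ) else 0)
              = (if g (JCval ω (i + m)) = b then (1:ℝ) else 0) * (1/4) := by
            intro b
            simp only [mul_ite, mul_one, mul_zero]
            by_cases h : g (JCval ω (i + m)) = b
            · simp [h, hcol]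
            · simp [h]
          rw [Finset.sum_congr rfl fun b _ => this b]
          simp)
    have hsum : ∑ ω : Fin n → Fin 4 × Fin 4, (∏ c, f (ω c)) *
        (∏ j ∈ Finset.range (m + 1),
          if g (JCval ω (i + j)) = g' (JCval ω (i + s + j)) then (1:ℝ) else 0)
        = ∑ ω : Fin n → Fin 4 × Fin 4, (∏ c, f (ω c)) *
          ((∏ j ∈ Finset.range m,
            if g (JCval ω (i + j)) = g' (JCval ω (i + s + j)) then (1:ℝ) else 0) *
            (if g (JCval ω (i + m)) = g' (ω q) then (1:ℝ) else 0)) := by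
      refine Finset.sum_congr rfl fun ω _ => ?_
      rw [Finset.prod_range_succ, JCval_lt ω hq]
    rw [hsum, key, ih (by omega), pow_succ]
    ring_nf

include hrow hcol in
/-- The same-site cross-sequence matching probability: the diagonal terms. -/
lemma JC_diag (p : ℝ) (hp : ∑ v : Fin 4 × Fin 4, f v * (if v.1 = v.2 then (1:ℝ) else 0) = p)
    (i : ℕ) :
    ∀ m : ℕ, i + m ≤ n →
    ∑ ω : Fin n → Fin 4 × Fin 4, (∏ c, f (ω c)) *
        (∏ j ∈ Finset.range m,
          if (JCval ω (i + j)).1 = (JCval ω (i + j)).2 then (1:ℝ) else 0)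
      = p ^ m := by
  intro m
  induction m with
  | zero =>
    intro _
    simpa using JC_mass f (JC_f_one f hrow hcol)
  | succ m ih =>
    intro hm
    have hq : i + m < n := by omega
    set q : Fin n := ⟨i + m, hq⟩ with hqdef
    have key := JC_core_split f (JC_f_one f hrow hcol) q
      (F := fun ω => ∏ j ∈ Finset.range m,
        if (JCval ω (i + j)).1 = (JCval ω (i + j)).2 then (1:ℝ) else 0)
      (G := fun _ v => if v.1 = v.2 then (1:ℝ) else 0)
      (hF := by
        intro ω v
        refine Finset.prod_congr rfl fun j hj => ?_
        have hj' : j < m := Finset.mem_range.mp hj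
        rw [JCval_update ω q v (p := i + j) (by simp [hqdef]; omega)])
      (hG := fun _ _ _ => rfl)
      (r := p)
      (hr := fun _ => hp)
    have hsum : ∑ ω : Fin n → Fin 4 × Fin 4, (∏ c, f (ω c)) *
        (∏ j ∈ Finset.range (m + 1),
          if (JCval ω (i + j)).1 = (JCval ω (i + j)).2 then (1:ℝ) else 0)
        = ∑ ω : Fin n → Fin 4 × Fin 4, (∏ c, f (ω c)) *
          ((∏ j ∈ Finset.range m,
            if (JCval ω (i + j)).1 = (JCval ω (i + j)).2 then (1:ℝ) else 0) *
            (if (ω q).1 = (ω q).2 then (1:ℝ) else 0)) := by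
      refine Finset.sum_congr rfl fun ω _ => ?_
      rw [Finset.prod_range_succ, JCval_lt ω hq]
    rw [hsum, key, ih (by omega), pow_succ]
    ring_nf

end Chain

/-- Window-matching indicator as a product over `Finset.range k`. -/
def JCC {n : ℕ} (k : ℕ) (g g' : Fin 4 × Fin 4 → Fin 4) (i i' : ℕ)
    (ω : Fin n → Fin 4 × Fin 4) : ℝ :=
  ∏ j ∈ Finset.range k, if g (JCval ω (i + j)) = g' (JCval ω (i' + j)) then (1:ℝ) else 0

lemma JCC_comm {n : ℕ} (k : ℕ) (g g' : Fin 4 × Fin 4 → Fin 4) (i i' : ℕ)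
    (ω : Fin n → Fin 4 × Fin 4) : JCC k g g' i i' ω = JCC k g' g i' i ω := by
  unfold JCC
  refine Finset.prod_congr rfl fun j _ => ?_
  by_cases h : g (JCval ω (i + j)) = g' (JCval ω (i' + j))
  · rw [if_pos h, if_pos h.symm]
  · rw [if_neg h, if_neg fun hh => h hh.symm]

section T

variable {n : ℕ} (f : Fin 4 × Fin 4 → ℝ)
  (hrow : ∀ a, ∑ b, f (a, b) = 1/4) (hcol : ∀ b, ∑ a, f (a, b) = 1/4)

include hrow hcol in
lemma JC_T_off (g g' : Fin 4 × Fin 4 → Fin 4)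
    (hg : g = Prod.fst ∨ g = Prod.snd) (hg' : g' = Prod.fst ∨ g' = Prod.snd)
    (k i i' : ℕ) (hne : i ≠ i') (h1 : i + k ≤ n) (h2 : i' + k ≤ n) :
    ∑ ω : Fin n → Fin 4 × Fin 4, (∏ c, f (ω c)) * JCC k g g' i i' ω = (1/4) ^ k := by
  rcases Nat.lt_or_ge i i' with hlt | hge
  · have hi' : i' = i + (i' - i) := by omega
    rw [hi']
    exact JC_chain f hrow hcol g g' hg hg' i (i' - i) (by omega) k (by omega)
  · have hlt' : i' < i := by omega
    have hcomm : ∀ ω : Fin n → Fin 4 × Fin 4, JCC k g g' i i' ω = JCC k g' g i' i ω :=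
      fun ω => JCC_comm k g g' i i' ω
    rw [Finset.sum_congr rfl fun ω _ => by rw [hcomm ω]]
    have hi : i = i' + (i - i') := by omega
    rw [hi]
    exact JC_chain f hrow hcol g' g hg' hg i' (i - i') (by omega) k (by omega)

include hrow hcol in
lemma JC_T_same (g : Fin 4 × Fin 4 → Fin 4) (k i : ℕ) :
    ∑ ω : Fin n → Fin 4 × Fin 4, (∏ c, f (ω c)) * JCC k g g i i ω = 1 := by
  have : ∀ ω : Fin n → Fin 4 × Fin 4, JCC k g g i i ω = 1 := by
    intro ω; unfold JCC; simp
  rw [Finset.sum_congr rfl fun ω _ => by rw [this ω]]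
  simpa using JC_mass f (JC_f_one f hrow hcol)

include hrow hcol in
lemma JC_T_cross12 (p : ℝ)
    (hp : ∑ v : Fin 4 × Fin 4, f v * (if v.1 = v.2 then (1:ℝ) else 0) = p)
    (k i : ℕ) (h : i + k ≤ n) :
    ∑ ω : Fin n → Fin 4 × Fin 4, (∏ c, f (ω c)) * JCC k Prod.fst Prod.snd i i ω = p ^ k :=
  JC_diag f hrow hcol p hp i k h

include hrow hcol in
lemma JC_T_cross21 (p : ℝ)
    (hp : ∑ v : Fin 4 × Fin 4, f v * (if v.1 = v.2 then (1:ℝ) else 0) = p)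
    (k i : ℕ) (h : i + k ≤ n) :
    ∑ ω : Fin n → Fin 4 × Fin 4, (∏ c, f (ω c)) * JCC k Prod.snd Prod.fst i i ω = p ^ k := by
  rw [Finset.sum_congr rfl fun ω _ => by rw [JCC_comm k Prod.snd Prod.fst i i ω]]
  exact JC_diag f hrow hcol p hp i k h

end T

lemma JC_match {k : ℕ} (u u' : Fin k → Fin 4) :
    ∑ W : Fin k → Fin 4,
        (if ∀ j, u j = W j then (1:ℝ) else 0) * (if ∀ j, u' j = W j then (1:ℝ) else 0)
      = if ∀ j, u j = u' j then 1 else 0 := by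
  classical
  have h1 : ∀ w W : Fin k → Fin 4, (∀ j, w j = W j) ↔ w = W := fun w W => funext_iff.symm
  simp only [h1]
  have h2 : ∀ W : Fin k → Fin 4,
      (if u = W then (1:ℝ) else 0) * (if u' = W then 1 else 0)
        = if u = W then (if u' = W then (1:ℝ) else 0) else 0 := by
    intro W; split <;> simp
  rw [Finset.sum_congr rfl fun W _ => h2 W, Finset.sum_ite_eq]
  by_cases h : u = u'
  · simp [h]
  · simp only [if_neg h, mem_univ, if_true, if_neg (fun hh : u' = u => h hh.symm)]

lemma JC_win {n k : ℕ} (g g' : Fin 4 × Fin 4 → Fin 4) (i i' : ℕ)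
    (h1 : i + k ≤ n) (h2 : i' + k ≤ n) (ω : Fin n → Fin 4 × Fin 4) :
    (if ∀ j : Fin k, g (ω ⟨i + j.1, by have := j.2; omega⟩)
          = g' (ω ⟨i' + j.1, by have := j.2; omega⟩) then (1:ℝ) else 0)
      = JCC k g g' i i' ω := by
  unfold JCC
  by_cases h : ∀ j : Fin k, g (ω ⟨i + j.1, by have := j.2; omega⟩)
      = g' (ω ⟨i' + j.1, by have := j.2; omega⟩)
  · rw [if_pos h, eq_comm]
    refine Finset.prod_eq_one fun j hj => ?_
    have hj' : j < k := Finset.mem_range.mp hj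
    rw [JCval_lt ω (show i + j < n by omega), JCval_lt ω (show i' + j < n by omega), if_pos]
    exact h ⟨j, hj'⟩
  · rw [if_neg h, eq_comm]
    obtain ⟨j, hjne⟩ := not_forall.mp h
    refine Finset.prod_eq_zero (Finset.mem_range.mpr j.2) ?_
    rw [JCval_lt ω (show i + (j:ℕ) < n by have := j.2; omega),
      JCval_lt ω (show i' + (j:ℕ) < n by have := j.2; omega), if_neg]
    exact hjne

/-!
Jukes–Cantor k-mer distance correction.  `Q` is the Jukes–Cantor rate matrix
(rate α = 1/3), `M = exp(tQ)` the transition matrix, the stationary distribution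
is uniform (1/4).  Sequences of length `n` have i.i.d. site pairs with joint
distribution `(1/4) * M(w,u)`; `d` is the expected squared Euclidean distance
between the k-mer count vectors.  Then
`t = -(3/4) * log((4/3) * (1 - d/(2(n-k+1)))^(1/k) - 1/3)`.
-/
theorem jukes_cantor_kmer_distance_correction
    (k n : ℕ) (hk : 1 ≤ k) (hkn : k ≤ n)
    (t : ℝ) (ht : 0 ≤ t)
    (Q : Matrix (Fin 4) (Fin 4) ℝ)
    (hQ : Q = Matrix.of fun i j => if i = j then (-1 : ℝ) else 1 / 3)
    (M : Matrix (Fin 4) (Fin 4) ℝ)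
    (hM : M = NormedSpace.exp (t • Q))
    (prob : (Fin n → Fin 4 × Fin 4) → ℝ)
    (hprob : ∀ ω, prob ω = ∏ i, (1 / 4 : ℝ) * M (ω i).1 (ω i).2)
    (E : ((Fin n → Fin 4 × Fin 4) → ℝ) → ℝ)
    (hE : ∀ f, E f = ∑ ω, prob ω * f ω)
    (X₁ X₂ : (Fin k → Fin 4) → (Fin n → Fin 4 × Fin 4) → ℝ)
    (hX₁ : ∀ W ω, X₁ W ω = ∑ i : Fin (n - k + 1),
      if ∀ j : Fin k, (ω ⟨i.1 + j.1, by have := i.2; have := j.2; omega⟩).1 = W j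
        then 1 else 0)
    (hX₂ : ∀ W ω, X₂ W ω = ∑ i : Fin (n - k + 1),
      if ∀ j : Fin k, (ω ⟨i.1 + j.1, by have := i.2; have := j.2; omega⟩).2 = W j
        then 1 else 0)
    (d : ℝ)
    (hd : d = E (fun ω => ∑ W : Fin k → Fin 4, (X₁ W ω - X₂ W ω) ^ 2)) :
    t = -(3 / 4) * Real.log
        ((4 / 3) * (1 - d / (2 * ((n - k + 1 : ℕ) : ℝ))) ^ ((1 : ℝ) / k) - 1 / 3) := by
  classical
  set N := n - k + 1 with hNdef
  have hN1 : 1 ≤ N := by omega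
  have Mform : ∀ i j : Fin 4, M i j =
      if i = j then (1 + 3 * JCa t) / 4 else (1 - JCa t) / 4 := by
    intro i j
    rw [hM, hQ, JC_Mform]
    rfl
  set a := JCa t with ha
  have hapos : 0 < a := by rw [ha]; exact Real.exp_pos _
  set p : ℝ := (1 + 3 * a) / 4 with hpdef
  set f : Fin 4 × Fin 4 → ℝ := fun v => 1/4 * M v.1 v.2 with hfdef
  have hrow : ∀ w : Fin 4, ∑ u, f (w, u) = 1/4 := by
    intro w
    simp only [hfdef]
    rw [← Finset.mul_sum]
    have h1 : ∑ u, M w u = 1 := by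
      rw [Fin.sum_univ_four]
      fin_cases w <;> simp [Mform] <;> ring
    rw [h1]; ring
  have hcol : ∀ u : Fin 4, ∑ w, f (w, u) = 1/4 := by
    intro u
    simp only [hfdef]
    rw [← Finset.mul_sum]
    have h1 : ∑ w, M w u = 1 := by
      rw [Fin.sum_univ_four]
      fin_cases u <;> simp [Mform] <;> ring
    rw [h1]; ring
  have hp : ∑ v : Fin 4 × Fin 4, f v * (if v.1 = v.2 then (1:ℝ) else 0) = p := by
    rw [Fintype.sum_prod_type]
    have h1 : ∀ w : Fin 4, ∑ u, f (w, u) * (if (w, u).1 = (w, u).2 then (1:ℝ) else 0)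
        = f (w, w) := by
      intro w
      have h2 : ∀ u : Fin 4, f (w, u) * (if (w, u).1 = (w, u).2 then (1:ℝ) else 0)
          = if w = u then f (w, u) else 0 := by
        intro u; by_cases h : w = u <;> simp [h]
      rw [Finset.sum_congr rfl fun u _ => h2 u, Finset.sum_ite_eq]
      simp
    rw [Finset.sum_congr rfl fun w _ => h1 w]
    have h3 : ∀ w : Fin 4, f (w, w) = 1/4 * p := by
      intro w; simp only [hfdef]; rw [Mform w w, if_pos rfl]
    rw [Finset.sum_congr rfl fun w _ => h3 w]
    simp only [Finset.sum_const, Finset.card_univ, Fintype.card_fin, nsmul_eq_mul]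
    ring
  have hprob' : ∀ ω, prob ω = ∏ c, f (ω c) := fun ω => by rw [hprob]
  have hik : ∀ i : Fin N, (i : ℕ) + k ≤ n := fun i => by have := i.2; omega
  -- rewrite the expected distance as a double sum over window positions
  have hd2 : d = ∑ i : Fin N, ∑ i' : Fin N, ∑ ω : Fin n → Fin 4 × Fin 4,
      (∏ c, f (ω c)) *
        (JCC k Prod.fst Prod.fst i.1 i'.1 ω - JCC k Prod.fst Prod.snd i.1 i'.1 ω
          - JCC k Prod.snd Prod.fst i.1 i'.1 ω + JCC k Prod.snd Prod.snd i.1 i'.1 ω) := by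
    rw [hd, hE]
    have hω : ∀ ω, prob ω * (∑ W : Fin k → Fin 4, (X₁ W ω - X₂ W ω) ^ 2)
        = ∑ i : Fin N, ∑ i' : Fin N, (∏ c, f (ω c)) *
          (JCC k Prod.fst Prod.fst i.1 i'.1 ω - JCC k Prod.fst Prod.snd i.1 i'.1 ω
            - JCC k Prod.snd Prod.fst i.1 i'.1 ω + JCC k Prod.snd Prod.snd i.1 i'.1 ω) := by
      intro ω
      have hW : (∑ W : Fin k → Fin 4, (X₁ W ω - X₂ W ω) ^ 2)
          = ∑ i : Fin N, ∑ i' : Fin N,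
            (JCC k Prod.fst Prod.fst i.1 i'.1 ω - JCC k Prod.fst Prod.snd i.1 i'.1 ω
              - JCC k Prod.snd Prod.fst i.1 i'.1 ω + JCC k Prod.snd Prod.snd i.1 i'.1 ω) := by
        have step1 : (∑ W : Fin k → Fin 4, (X₁ W ω - X₂ W ω) ^ 2)
            = ∑ W : Fin k → Fin 4, ∑ i : Fin N, ∑ i' : Fin N,
              ((if ∀ j : Fin k, (ω ⟨i.1 + j.1, by have := i.2; have := j.2; omega⟩).1 = W j
                  then (1:ℝ) else 0)
                - (if ∀ j : Fin k, (ω ⟨i.1 + j.1, by have := i.2; have := j.2; omega⟩).2 = W j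
                  then (1:ℝ) else 0)) *
              ((if ∀ j : Fin k, (ω ⟨i'.1 + j.1, by have := i'.2; have := j.2; omega⟩).1 = W j
                  then (1:ℝ) else 0)
                - (if ∀ j : Fin k, (ω ⟨i'.1 + j.1, by have := i'.2; have := j.2; omega⟩).2 = W j
                  then (1:ℝ) else 0)) := by
          refine Finset.sum_congr rfl fun W _ => ?_
          rw [hX₁, hX₂, ← Finset.sum_sub_distrib, sq, Finset.sum_mul_sum]
        rw [step1, Finset.sum_comm]
        refine Finset.sum_congr rfl fun i _ => ?_
        rw [Finset.sum_comm]
        refine Finset.sum_congr rfl fun i' _ => ?_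
        have expand : ∀ x y z w : ℝ, (x - y) * (z - w) = x*z - x*w - y*z + y*w := by
          intros; ring
        rw [Finset.sum_congr rfl fun W _ => expand _ _ _ _]
        rw [Finset.sum_add_distrib, Finset.sum_sub_distrib, Finset.sum_sub_distrib]
        rw [JC_match, JC_match, JC_match, JC_match]
        rw [JC_win Prod.fst Prod.fst i.1 i'.1 (hik i) (hik i') ω,
          JC_win Prod.fst Prod.snd i.1 i'.1 (hik i) (hik i') ω,
          JC_win Prod.snd Prod.fst i.1 i'.1 (hik i) (hik i') ω,
          JC_win Prod.snd Prod.snd i.1 i'.1 (hik i) (hik i') ω]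
      rw [hW, hprob' ω, Finset.mul_sum]
      exact Finset.sum_congr rfl fun i _ => Finset.mul_sum _ _ _
    rw [Finset.sum_congr rfl fun ω _ => hω ω, Finset.sum_comm]
    exact Finset.sum_congr rfl fun i _ => Finset.sum_comm
  -- evaluate each (i, i') term
  have hterm : ∀ i i' : Fin N, (∑ ω : Fin n → Fin 4 × Fin 4,
      (∏ c, f (ω c)) *
        (JCC k Prod.fst Prod.fst i.1 i'.1 ω - JCC k Prod.fst Prod.snd i.1 i'.1 ω
          - JCC k Prod.snd Prod.fst i.1 i'.1 ω + JCC k Prod.snd Prod.snd i.1 i'.1 ω))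
      = if i = i' then 2 - 2 * p ^ k else 0 := by
    intro i i'
    have hsplit : ∑ ω : Fin n → Fin 4 × Fin 4, (∏ c, f (ω c)) *
        (JCC k Prod.fst Prod.fst i.1 i'.1 ω - JCC k Prod.fst Prod.snd i.1 i'.1 ω
          - JCC k Prod.snd Prod.fst i.1 i'.1 ω + JCC k Prod.snd Prod.snd i.1 i'.1 ω)
        = (∑ ω : Fin n → Fin 4 × Fin 4, (∏ c, f (ω c)) * JCC k Prod.fst Prod.fst i.1 i'.1 ω)
          - (∑ ω : Fin n → Fin 4 × Fin 4, (∏ c, f (ω c)) * JCC k Prod.fst Prod.snd i.1 i'.1 ω)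
          - (∑ ω : Fin n → Fin 4 × Fin 4, (∏ c, f (ω c)) * JCC k Prod.snd Prod.fst i.1 i'.1 ω)
          + (∑ ω : Fin n → Fin 4 × Fin 4, (∏ c, f (ω c)) * JCC k Prod.snd Prod.snd i.1 i'.1 ω) := by
      simp only [mul_sub, mul_add]
      rw [Finset.sum_add_distrib, Finset.sum_sub_distrib, Finset.sum_sub_distrib]
    rw [hsplit]
    by_cases h : i = i'
    · subst h
      rw [if_pos rfl]
      rw [JC_T_same f hrow hcol Prod.fst k i.1, JC_T_same f hrow hcol Prod.snd k i.1,
        JC_T_cross12 f hrow hcol p hp k i.1 (hik i), JC_T_cross21 f hrow hcol p hp k i.1 (hik i)]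
      ring
    · rw [if_neg h]
      have hne : (i : ℕ) ≠ (i' : ℕ) := fun hh => h (Fin.ext hh)
      rw [JC_T_off f hrow hcol Prod.fst Prod.fst (Or.inl rfl) (Or.inl rfl) k i.1 i'.1 hne
          (hik i) (hik i'),
        JC_T_off f hrow hcol Prod.fst Prod.snd (Or.inl rfl) (Or.inr rfl) k i.1 i'.1 hne
          (hik i) (hik i'),
        JC_T_off f hrow hcol Prod.snd Prod.fst (Or.inr rfl) (Or.inl rfl) k i.1 i'.1 hne
          (hik i) (hik i'),
        JC_T_off f hrow hcol Prod.snd Prod.snd (Or.inr rfl) (Or.inr rfl) k i.1 i'.1 hne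
          (hik i) (hik i')]
      ring
  have hdval : d = (N : ℝ) * (2 - 2 * p ^ k) := by
    rw [hd2, Finset.sum_congr rfl fun i _ => Finset.sum_congr rfl fun i' _ => hterm i i']
    rw [Finset.sum_congr rfl fun i (_ : i ∈ Finset.univ) => Finset.sum_ite_eq Finset.univ i
      (fun _ => 2 - 2 * p ^ k)]
    simp [Finset.sum_const, Finset.card_univ, mul_comm]
    ring
  -- final algebra
  have hNne : ((N : ℕ) : ℝ) ≠ 0 := by
    have : (0:ℝ) < (N : ℝ) := by exact_mod_cast Nat.pos_of_ne_zero (by omega)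
    exact ne_of_gt this
  have harg : 1 - d / (2 * (N : ℝ)) = p ^ k := by
    rw [hdval]
    field_simp
    ring
  rw [harg]
  have hppos : 0 < p := by rw [hpdef]; linarith
  have hk0 : (k : ℝ) ≠ 0 := Nat.cast_ne_zero.mpr (by omega)
  have hpow : ((p ^ k : ℝ)) ^ ((1:ℝ)/(k:ℝ)) = p := by
    rw [← Real.rpow_natCast p k, ← Real.rpow_mul hppos.le, mul_one_div, div_self hk0,
      Real.rpow_one]
  rw [hpow]
  have harg2 : (4/3 : ℝ) * p - 1/3 = a := by rw [hpdef]; ring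
  rw [harg2, ha]
  rw [show JCa t = Real.exp (-(4*t)/3) from rfl, Real.log_exp]
  ring
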